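/- Let A and B be Banach algebras, T ∈ hom(B, A), and ψ a character on B. An element (Φ,Ψ) ∈ A'' ×_{T''} B'' is (0,ψ)-topologically left invariant with ⟨(Φ,Ψ),(0,ψ)⟩ ≠ 0 if and only if Ψ is ψ-topologically left invariant with Ψ(ψ) ≠ 0 and Φ = −T''(Ψ). -/

import Mathlib

open ContinuousLinearMap NormedSpace

variable {A B : Type*}
  [NonUnitalNormedRing A] [NormedSpace ℂ A] [IsScalarTower ℂ A A] [SMulCommClass ℂ A A]
  [CompleteSpace A]
  [NonUnitalNormedRing B] [NormedSpace ℂ B] [IsScalarTower ℂ B B] [SMulCommClass ℂ B B]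
  [CompleteSpace B]

/-- The morphism-product multiplication on `A × B`:
`(a₁,b₁)·(a₂,b₂) = (a₁a₂ + a₁T(b₂) + T(b₁)a₂, b₁b₂)`. -/
noncomputable def tMul (T : B →L[ℂ] A) (u v : A × B) : A × B :=
  (u.1 * v.1 + u.1 * T v.2 + T u.2 * v.1, u.2 * v.2)

/-- The ℓ¹ norm `‖(a,b)‖ = ‖a‖ + ‖b‖` on `A × B`. -/
noncomputable def tNorm (u : A × B) : ℝ := ‖u.1‖ + ‖u.2‖

/-- Auxiliary map: for `Φ` in the second dual of `E` and a bundled bilinear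
multiplication `M` on `E`, this is `f ↦ (a ↦ Φ (f ∘ M a))`, i.e. `f ↦ Φ · f`. -/
noncomputable def rAct {E : Type*} [NormedAddCommGroup E] [NormedSpace ℂ E]
    (M : E →L[ℂ] E →L[ℂ] E) (Φ : StrongDual ℂ (StrongDual ℂ E)) : StrongDual ℂ E →L[ℂ] StrongDual ℂ E :=
  (compL ℂ E (StrongDual ℂ E) ℂ Φ).comp
    (((compL ℂ E (E →L[ℂ] E) (StrongDual ℂ E)).flip M).comp (compL ℂ E E ℂ))

/-- The first Arens product `Φ □ Ψ` on the second dual of `E`, where the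
multiplication of `E` is given by the bundled bilinear map `M`:
`⟨Φ□Ψ, f⟩ = ⟨Φ, Ψ·f⟩` with `(Ψ·f)(a) = Ψ(f·a)` and `(f·a)(x) = f(ax)`. -/
noncomputable def arens1 {E : Type*} [NormedAddCommGroup E] [NormedSpace ℂ E]
    (M : E →L[ℂ] E →L[ℂ] E) (Φ Ψ : StrongDual ℂ (StrongDual ℂ E)) : StrongDual ℂ (StrongDual ℂ E) :=
  Φ.comp (rAct M Ψ)

/-- The second Arens product `Φ ◊ Ψ` on the second dual of `E`:
`⟨Φ◊Ψ, f⟩ = ⟨Ψ, f·Φ⟩` with `(f·Φ)(a) = Φ(a·f)` and `(a·f)(x) = f(xa)`. -/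
noncomputable def arens2 {E : Type*} [NormedAddCommGroup E] [NormedSpace ℂ E]
    (M : E →L[ℂ] E →L[ℂ] E) (Φ Ψ : StrongDual ℂ (StrongDual ℂ E)) : StrongDual ℂ (StrongDual ℂ E) :=
  Ψ.comp (rAct M.flip Φ)

/-- Bundled bilinear map `(u,v) ↦ M (f u) (g v)`. -/
noncomputable def bcomp {P E : Type*} [NormedAddCommGroup P] [NormedSpace ℂ P]
    [NormedAddCommGroup E] [NormedSpace ℂ E]
    (M : E →L[ℂ] E →L[ℂ] E) (f g : P →L[ℂ] E) : P →L[ℂ] P →L[ℂ] E :=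
  ((compL ℂ P E E).flip g).comp (M.comp f)

/-- The morphism-product multiplication `tMul T`, as a bundled bilinear map;
`tMulCLM T u v = tMul T u v`. -/
noncomputable def tMulCLM (T : B →L[ℂ] A) : (A × B) →L[ℂ] (A × B) →L[ℂ] (A × B) :=
  ((compL ℂ (A × B) A (A × B) (inl ℂ A B)).comp
    (bcomp (mul ℂ A) (fst ℂ A B) (fst ℂ A B + T.comp (snd ℂ A B)) +
     bcomp (mul ℂ A) (T.comp (snd ℂ A B)) (fst ℂ A B))) +
  ((compL ℂ (A × B) B (A × B) (inr ℂ A B)).comp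
    (bcomp (mul ℂ B) (snd ℂ A B) (snd ℂ A B)))

/-- The adjoint `T' : A' → B'`, `T'(f) = f ∘ T`. -/
noncomputable def dualT (T : B →L[ℂ] A) : StrongDual ℂ A →L[ℂ] StrongDual ℂ B := (compL ℂ B A ℂ).flip T

/-- The double adjoint `T'' : B'' → A''`, `T''(F) = F ∘ T'`. -/
noncomputable def ddT (T : B →L[ℂ] A) : StrongDual ℂ (StrongDual ℂ B) →L[ℂ] StrongDual ℂ (StrongDual ℂ A) :=
  (compL ℂ (StrongDual ℂ A) (StrongDual ℂ B) ℂ).flip (dualT T)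

/-- The identification `Θ : A'' × B'' → (A × B)''`, `Θ(Φ,Ψ)(F) = Φ(F∘inl) + Ψ(F∘inr)`,
i.e. `Θ(Φ,Ψ)(f,g) = Φ(f) + Ψ(g)` under the identification `(A × B)' ≅ A' × B'`. -/
noncomputable def Theta (Φ : StrongDual ℂ (StrongDual ℂ A)) (Ψ : StrongDual ℂ (StrongDual ℂ B)) :
    StrongDual ℂ (StrongDual ℂ (A × B)) :=
  Φ.comp ((compL ℂ A (A × B) ℂ).flip (inl ℂ A B)) +
  Ψ.comp ((compL ℂ B (A × B) ℂ).flip (inr ℂ A B))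

/-- The functional `(a,b) ↦ φ(a) + φ(T(b))` on `A × B`, for `φ : A → ℂ`. -/
noncomputable def charExt (T : B →L[ℂ] A) (φ : A →L[ℂ] ℂ) : (A × B) →L[ℂ] ℂ :=
  φ.comp (fst ℂ A B) + (φ.comp T).comp (snd ℂ A B)

/-- The functional `(a,b) ↦ ψ(b)` on `A × B`, for `ψ : B → ℂ`. -/
noncomputable def charSnd (ψ : B →L[ℂ] ℂ) : (A × B) →L[ℂ] ℂ :=
  ψ.comp (snd ℂ A B)


set_option linter.unusedSectionVars false

lemma tMulCLM_apply (T : B →L[ℂ] A) (u v : A × B) : tMulCLM T u v = tMul T u v := by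
  simp [tMulCLM, bcomp, tMul]

lemma rAct_iota {E : Type*} [NormedAddCommGroup E] [NormedSpace ℂ E]
    (M : E →L[ℂ] E →L[ℂ] E) (u : E) (f : StrongDual ℂ E) :
    rAct M (inclusionInDoubleDual ℂ E u) f = f.comp (M.flip u) := by
  ext a; simp [rAct]

lemma arens1_iota {E : Type*} [NormedAddCommGroup E] [NormedSpace ℂ E]
    (M : E →L[ℂ] E →L[ℂ] E) (X : StrongDual ℂ (StrongDual ℂ E)) (u : E) (f : StrongDual ℂ E) :
    arens1 M X (inclusionInDoubleDual ℂ E u) f = X (f.comp (M.flip u)) := by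
  simp [arens1, rAct_iota]

lemma theta_apply (Φ : StrongDual ℂ (StrongDual ℂ A)) (Ψ : StrongDual ℂ (StrongDual ℂ B)) (F : StrongDual ℂ (A × B)) :
    Theta Φ Ψ F = Φ (F.comp (inl ℂ A B)) + Ψ (F.comp (inr ℂ A B)) := by
  simp [Theta]

lemma key (T : B →L[ℂ] A) (Φ : StrongDual ℂ (StrongDual ℂ A)) (Ψ : StrongDual ℂ (StrongDual ℂ B))
    (u : A × B) (f : StrongDual ℂ (A × B)) :
    arens1 (tMulCLM T) (Theta Φ Ψ) (inclusionInDoubleDual ℂ (A × B) u) f =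
      Φ ((f.comp (inl ℂ A B)).comp ((mul ℂ A).flip (u.1 + T u.2))) +
      Ψ ((((f.comp (inl ℂ A B)).comp ((mul ℂ A).flip u.1)).comp T) +
         (f.comp (inr ℂ A B)).comp ((mul ℂ B).flip u.2)) := by
  rw [arens1_iota, theta_apply]
  congr 1
  · congr 1; ext x
    simp only [coe_comp', Function.comp_apply, flip_apply, inl_apply, tMulCLM_apply, tMul,
      mul_apply', ContinuousLinearMap.add_apply]
    congr 1
    simp [mul_add]
  · congr 1; ext y
    simp only [coe_comp', Function.comp_apply, flip_apply, inl_apply, inr_apply, tMulCLM_apply,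
      tMul, mul_apply', ContinuousLinearMap.add_apply]
    rw [← map_add]
    congr 1
    simp


lemma ddT_apply (T : B →L[ℂ] A) (Ψ : StrongDual ℂ (StrongDual ℂ B)) (g : StrongDual ℂ A) :
    ddT T Ψ g = Ψ (g.comp T) := by
  simp [ddT, dualT]

/-- for a character `ψ` on `B`, `(Φ,Ψ)` is `(0,ψ)`-topologically left
invariant with `⟨(Φ,Ψ),(0,ψ)⟩ = Ψ(ψ) ≠ 0` iff `Ψ` is `ψ`-topologically left invariant
with `Ψ(ψ) ≠ 0` and `Φ = −T''(Ψ)`. -/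
theorem tli_for_charSnd
    (T : B →L[ℂ] A) (hT : ∀ x y, T (x * y) = T x * T y) (hTn : ‖T‖ ≤ 1)
    (ψ : B →L[ℂ] ℂ) (hψ0 : ψ ≠ 0) (hψm : ∀ x y : B, ψ (x * y) = ψ x * ψ y)
    (Φ : StrongDual ℂ (StrongDual ℂ A)) (Ψ : StrongDual ℂ (StrongDual ℂ B)) :
    ((∀ u : A × B,
        arens1 (tMulCLM T) (Theta Φ Ψ) (inclusionInDoubleDual ℂ (A × B) u) =
          ψ u.2 • Theta Φ Ψ) ∧
      Ψ ψ ≠ 0) ↔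
    ((∀ b : B, arens1 (mul ℂ B) Ψ (inclusionInDoubleDual ℂ B b) = ψ b • Ψ) ∧
      Ψ ψ ≠ 0 ∧ Φ = -(ddT T Ψ)) := by
  -- Reformulate the B-side TLI condition
  have hBiff : (∀ b : B, arens1 (mul ℂ B) Ψ (inclusionInDoubleDual ℂ B b) = ψ b • Ψ) ↔
      (∀ (b : B) (g : StrongDual ℂ B), Ψ (g.comp ((mul ℂ B).flip b)) = ψ b * Ψ g) := by
    constructor
    · intro h b g
      have h' := DFunLike.congr_fun (h b) g
      rw [arens1_iota] at h'
      simpa [smul_eq_mul] using h'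
    · intro h b
      ext g
      rw [arens1_iota]
      simpa [smul_eq_mul] using h b g
  -- Reformulate the product-side TLI condition
  have hkey : (∀ u : A × B,
      arens1 (tMulCLM T) (Theta Φ Ψ) (inclusionInDoubleDual ℂ (A × B) u) =
        ψ u.2 • Theta Φ Ψ) ↔
      ∀ (u : A × B) (f₁ : StrongDual ℂ A) (f₂ : StrongDual ℂ B),
        Φ (f₁.comp ((mul ℂ A).flip (u.1 + T u.2))) +
        Ψ ((f₁.comp ((mul ℂ A).flip u.1)).comp T + f₂.comp ((mul ℂ B).flip u.2)) =
        ψ u.2 * (Φ f₁ + Ψ f₂) := by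
    constructor
    · intro h u f₁ f₂
      have h1 : (f₁.comp (fst ℂ A B) + f₂.comp (snd ℂ A B)).comp (inl ℂ A B) = f₁ := by
        ext x; simp
      have h2 : (f₁.comp (fst ℂ A B) + f₂.comp (snd ℂ A B)).comp (inr ℂ A B) = f₂ := by
        ext y; simp
      have h3 := DFunLike.congr_fun (h u) (f₁.comp (fst ℂ A B) + f₂.comp (snd ℂ A B))
      rw [key, h1, h2] at h3
      rw [h3]
      simp [theta_apply, h1, h2, smul_eq_mul]
    · intro h u
      ext f
      rw [key]
      have h' := h u (f.comp (inl ℂ A B)) (f.comp (inr ℂ A B))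
      rw [h']
      simp [theta_apply, smul_eq_mul]
  rw [hkey, hBiff]
  constructor
  · rintro ⟨h, hne⟩
    have hTLI : ∀ (b : B) (g : StrongDual ℂ B), Ψ (g.comp ((mul ℂ B).flip b)) = ψ b * Ψ g := by
      intro b g
      have h0 := h (0, b) 0 g
      simpa using h0
    refine ⟨hTLI, hne, ?_⟩
    obtain ⟨b0, hb0⟩ : ∃ b : B, ψ b ≠ 0 := by
      by_contra hc
      push_neg at hc
      exact hψ0 (by ext b; simpa using hc b)
    ext g
    have h1 := h (-(T b0), b0) g 0
    have hc : (g.comp ((mul ℂ A).flip (-(T b0)))).comp T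
        = -((g.comp T).comp ((mul ℂ B).flip b0)) := by
      ext y
      simp [hT]
    rw [hc] at h1
    simp only [neg_add_cancel, map_zero, comp_zero, zero_comp, zero_add, add_zero,
      map_neg] at h1
    rw [hTLI] at h1
    rw [ContinuousLinearMap.neg_apply, ddT_apply]
    refine mul_left_cancel₀ hb0 ?_
    rw [← h1]
    ring
  · rintro ⟨hTLI, hne, hΦ⟩
    refine ⟨?_, hne⟩
    intro u f₁ f₂
    have hΦ' : ∀ g : StrongDual ℂ A, Φ g = -(Ψ (g.comp T)) := by
      intro g
      rw [hΦ, ContinuousLinearMap.neg_apply, ddT_apply]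
    have hflip : f₁.comp ((mul ℂ A).flip (u.1 + T u.2)) =
        f₁.comp ((mul ℂ A).flip u.1) + f₁.comp ((mul ℂ A).flip (T u.2)) := by
      ext x; simp [mul_add]
    have hc : (f₁.comp ((mul ℂ A).flip (T u.2))).comp T
        = (f₁.comp T).comp ((mul ℂ B).flip u.2) := by
      ext y; simp [hT]
    rw [hflip, map_add, hΦ' (f₁.comp ((mul ℂ A).flip u.1)),
      hΦ' (f₁.comp ((mul ℂ A).flip (T u.2))), hc, map_add,
      hTLI u.2 (f₁.comp T), hTLI u.2 f₂, hΦ' f₁]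
    ring
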